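/- Let R be a semisimple ring and M a right R-module. Then M is endoartinian if and only if M is a noetherian R-module. -/

import Mathlib

/-- A module `M` over a ring `S` is *endoartinian* if every descending chain of images of
module endomorphisms of `M` stabilizes.  (A right `R`-module is treated as a module over
`Rᵐᵒᵖ`.) -/
def IsEndoartinian (S M : Type*) [Ring S] [AddCommGroup M] [Module S M] : Prop :=
  ∀ f : ℕ → M →ₗ[S] M,
    (∀ n, LinearMap.range (f (n + 1)) ≤ LinearMap.range (f n)) →
    ∃ n, ∀ k, n ≤ k → LinearMap.range (f k) = LinearMap.range (f n)

/-- `R` is linearly equivalent to `Rᵐᵒᵖ` as an `Rᵐᵒᵖ`-module. -/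
def opSelfLinearEquiv (R : Type*) [Ring R] : Rᵐᵒᵖ ≃ₗ[Rᵐᵒᵖ] R :=
  { MulOpposite.opAddEquiv.symm with
    map_smul' := fun r x => by
      cases x
      rfl }

/-- Over a semisimple ring, a module is endoartinian iff it is noetherian. -/
theorem isEndoartinian_iff_isNoetherian_of_semisimpleRing (R M : Type*) [Ring R]
    [AddCommGroup M] [Module Rᵐᵒᵖ M] (hR : IsSemisimpleModule Rᵐᵒᵖ R) :
    IsEndoartinian Rᵐᵒᵖ M ↔ IsNoetherian Rᵐᵒᵖ M := by
  haveI : IsSemisimpleModule Rᵐᵒᵖ R := hR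
  haveI : IsSemisimpleRing Rᵐᵒᵖ := IsSemisimpleModule.congr (opSelfLinearEquiv R)
  haveI hsM : IsSemisimpleModule Rᵐᵒᵖ M := inferInstance
  constructor
  · -- endoartinian → noetherian
    intro hEndo
    by_contra hNoeth
    rw [isNoetherian_iff] at hNoeth
    obtain ⟨g⟩ := not_isEmpty_iff.mp
      (fun h => hNoeth (RelEmbedding.wellFounded_iff_isEmpty.mpr h))
    set N : ℕ → Submodule Rᵐᵒᵖ M := fun n => g n with hN
    have hNlt : ∀ n, N n < N (n + 1) := fun n => g.map_rel_iff.mpr (Nat.lt_succ_self n)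
    -- key step: shrink the complement
    have key : ∀ (n : ℕ) (q : Submodule Rᵐᵒᵖ M), IsCompl (N n) q →
        ∃ q', q' ≤ q ∧ IsCompl (N (n + 1)) q' ∧ q' ≠ q := by
      intro n q h
      set A : Submodule Rᵐᵒᵖ M := N (n + 1) ⊓ q with hA
      have hAq : A ≤ q := inf_le_right
      obtain ⟨E, hE⟩ := exists_isCompl (A.comap q.subtype)
      refine ⟨E.map q.subtype, Submodule.map_subtype_le q E, ?_, ?_⟩
      · have hDq : E.map q.subtype ≤ q := Submodule.map_subtype_le q E
        have hmapA : (A.comap q.subtype).map q.subtype = A := by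
          rw [Submodule.map_comap_subtype, inf_eq_right.mpr hAq]
        have hinf : E.map q.subtype ⊓ A = ⊥ := by
          rw [← hmapA, ← Submodule.map_inf _ q.injective_subtype,
            disjoint_iff.mp hE.disjoint.symm, Submodule.map_bot]
        have hsup : E.map q.subtype ⊔ A = q := by
          rw [← hmapA, ← Submodule.map_sup, codisjoint_iff.mp hE.codisjoint.symm,
            Submodule.map_top, Submodule.range_subtype]
        constructor
        · rw [disjoint_iff]
          have h1 : N (n + 1) ⊓ E.map q.subtype ≤ A := by
            rw [hA]
            exact le_inf inf_le_left (le_trans inf_le_right hDq)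
          have h2 : N (n + 1) ⊓ E.map q.subtype ≤ A ⊓ E.map q.subtype :=
            le_inf h1 inf_le_right
          rw [inf_comm] at hinf
          exact le_bot_iff.mp (hinf ▸ h2)
        · rw [codisjoint_iff]
          have h3 : N n ⊔ (A ⊔ E.map q.subtype) ≤ N (n + 1) ⊔ E.map q.subtype := by
            refine sup_le (le_trans (le_of_lt (hNlt n)) le_sup_left)
              (sup_le (le_trans inf_le_left le_sup_left) le_sup_right)
          rw [sup_comm (a := A)] at h3
          rw [hsup, codisjoint_iff.mp h.codisjoint] at h3
          exact top_le_iff.mp h3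
      · intro hEq
        have hA0 : A = ⊥ := by
          have hmapA : (A.comap q.subtype).map q.subtype = A := by
            rw [Submodule.map_comap_subtype, inf_eq_right.mpr hAq]
          have hinf : E.map q.subtype ⊓ A = ⊥ := by
            rw [← hmapA, ← Submodule.map_inf _ q.injective_subtype,
              disjoint_iff.mp hE.disjoint.symm, Submodule.map_bot]
          rw [hEq] at hinf
          rw [← hinf, inf_eq_right.mpr hAq]
        have : N (n + 1) = N n := by
          have := sup_inf_assoc_of_le (y := q) (le_of_lt (hNlt n))
          rw [codisjoint_iff.mp h.codisjoint, top_inf_eq, inf_comm (a := q), ← hA, hA0, sup_bot_eq] at this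
          exact this
        exact (ne_of_lt (hNlt n)) this.symm
    obtain ⟨c0, hc0⟩ := exists_isCompl (N 0)
    choose gq hgle hgc hgne using key
    let C : (n : ℕ) → {q : Submodule Rᵐᵒᵖ M // IsCompl (N n) q} := fun n =>
      Nat.rec ⟨c0, hc0⟩ (fun n p => ⟨gq n p.1 p.2, hgc n p.1 p.2⟩) n
    let F : ℕ → M →ₗ[Rᵐᵒᵖ] M := fun n =>
      (C n).1.subtype ∘ₗ Submodule.projectionOnto (C n).1 (N n) (C n).2.symm
    have hrange : ∀ n, LinearMap.range (F n) = (C n).1 := by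
      intro n
      rw [LinearMap.range_comp, Submodule.range_projectionOnto,
        Submodule.map_top, Submodule.range_subtype]
    have hdesc : ∀ n, LinearMap.range (F (n + 1)) ≤ LinearMap.range (F n) := by
      intro n
      rw [hrange, hrange]
      exact hgle n (C n).1 (C n).2
    obtain ⟨n, hn⟩ := hEndo F hdesc
    have := hn (n + 1) (Nat.le_succ n)
    rw [hrange, hrange] at this
    exact hgne n (C n).1 (C n).2 this
  · -- noetherian → endoartinian
    intro hN
    haveI := hN
    haveI : IsArtinian Rᵐᵒᵖ M := (IsSemisimpleModule.finite_tfae.out 1 2).mp hN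
    intro f hf
    have hanti : Antitone (fun n => LinearMap.range (f n)) :=
      antitone_nat_of_succ_le hf
    obtain ⟨n, hn⟩ := IsArtinian.monotone_stabilizes
      (⟨fun n => OrderDual.toDual (LinearMap.range (f n)), fun a b hab => hanti hab⟩ :
        ℕ →o (Submodule Rᵐᵒᵖ M)ᵒᵈ)
    exact ⟨n, fun k hk => (hn k hk).symm⟩
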